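/- Let J be a finite set. A function ψ : 2^J → ℝ is weakly infinite-alternating if and only if it can be written as ψ = φ − μ where φ is infinite-alternating and μ is a nonnegative charge (a nonnegative modular function vanishing on ∅). -/

import Mathlib

/-- Alternating sum for set functions on a finite domain. -/
noncomputable def altSumF {J : Type*} [DecidableEq J] (φ : Finset J → ℝ)
    (A₀ : Finset J) {k : ℕ} (A : Fin k → Finset J) : ℝ :=
  ∑ K : Finset (Fin k), (-1 : ℝ) ^ K.card * φ (A₀ ∪ K.biUnion A)

/-- `ψ` is weakly infinite-alternating. -/
def WeaklyInfAltF {J : Type*} [DecidableEq J] (ψ : Finset J → ℝ) : Prop :=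
  ψ ∅ = 0 ∧ ∀ (k : ℕ), 2 ≤ k → ∀ (A₀ : Finset J) (A : Fin k → Finset J),
    (∀ i, Disjoint A₀ (A i)) → (∀ i j, i ≠ j → Disjoint (A i) (A j)) →
    altSumF ψ A₀ A ≤ 0

/-- `φ` is infinite-alternating. -/
def InfAltF {J : Type*} [DecidableEq J] (φ : Finset J → ℝ) : Prop :=
  φ ∅ = 0 ∧ ∀ (k : ℕ), 1 ≤ k → ∀ (A₀ : Finset J) (A : Fin k → Finset J),
    altSumF φ A₀ A ≤ 0

namespace Stmt16
variable {J : Type*} [DecidableEq J]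

variable {J : Type*} [DecidableEq J]

noncomputable def altL (ψ : Finset J → ℝ) : Finset J → List (Finset J) → ℝ
  | A₀, [] => ψ A₀
  | A₀, B :: L => altL ψ A₀ L - altL ψ (A₀ ∪ B) L

@[simp] lemma altL_nil (ψ : Finset J → ℝ) (A₀ : Finset J) : altL ψ A₀ [] = ψ A₀ := rfl
@[simp] lemma altL_cons (ψ : Finset J → ℝ) (A₀ B : Finset J) (L : List (Finset J)) :
    altL ψ A₀ (B :: L) = altL ψ A₀ L - altL ψ (A₀ ∪ B) L := rfl

lemma powerset_map_eq {k : ℕ} :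
    ((Finset.univ.map (Fin.succEmb k)) : Finset (Fin (k+1))).powerset
      = Finset.univ.image (fun K : Finset (Fin k) => K.map (Fin.succEmb k)) := by
  ext T
  simp [Finset.mem_powerset, Finset.subset_map_iff, eq_comm]

lemma biUnion_map_succ {k : ℕ} (B : Finset J) (A : Fin k → Finset J) (K : Finset (Fin k)) :
    (K.map (Fin.succEmb k)).biUnion (Fin.cons B A) = K.biUnion A := by
  ext a
  simp [Fin.succEmb]

lemma altSumF_cons (φ : Finset J → ℝ) (A₀ B : Finset J) {k : ℕ} (A : Fin k → Finset J) :
    altSumF φ A₀ (Fin.cons B A) = altSumF φ A₀ A - altSumF φ (A₀ ∪ B) A := by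
  have h0 : (0 : Fin (k+1)) ∉ Finset.univ.map (Fin.succEmb k) := by
    simp [Fin.succEmb, Fin.succ_ne_zero]
  have hinj : Function.Injective (fun K : Finset (Fin k) => K.map (Fin.succEmb k)) :=
    fun K K' h => Finset.map_injective _ h
  calc altSumF φ A₀ (Fin.cons B A)
      = ∑ K ∈ (Finset.univ : Finset (Fin (k+1))).powerset,
          (-1 : ℝ) ^ K.card * φ (A₀ ∪ K.biUnion (Fin.cons B A)) := by
        rw [Finset.powerset_univ]; rfl
    _ = ∑ K ∈ (insert 0 (Finset.univ.map (Fin.succEmb k))).powerset,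
          (-1 : ℝ) ^ K.card * φ (A₀ ∪ K.biUnion (Fin.cons B A)) := by
        rw [Fin.univ_succ, Finset.cons_eq_insert]; rfl
    _ = altSumF φ A₀ A - altSumF φ (A₀ ∪ B) A := by
        rw [Finset.sum_powerset_insert h0, powerset_map_eq, Finset.sum_image (fun a _ b _ h => hinj h),
          Finset.sum_image (fun a _ b _ h => hinj h)]
        unfold altSumF
        rw [sub_eq_add_neg, ← Finset.sum_neg_distrib]
        congr 1
        · apply Finset.sum_congr rfl
          intro K _
          rw [Finset.card_map, biUnion_map_succ]
        · apply Finset.sum_congr rfl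
          intro K _
          have h0K : (0 : Fin (k+1)) ∉ K.map (Fin.succEmb k) := by
            simp [Fin.succEmb, Fin.succ_ne_zero]
          rw [Finset.card_insert_of_notMem h0K, Finset.biUnion_insert, Finset.card_map,
            biUnion_map_succ]
          rw [Fin.cons_zero, pow_succ]
          rw [← Finset.union_assoc]
          ring

lemma altSumF_eq_altL (φ : Finset J → ℝ) : ∀ {k : ℕ} (A₀ : Finset J) (A : Fin k → Finset J),
    altSumF φ A₀ A = altL φ A₀ (List.ofFn A) := by
  intro k
  induction k with
  | zero =>
    intro A₀ A
    have hd : (default : Finset (Fin 0)) = ∅ := Subsingleton.elim _ _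
    simp [altSumF, altL, Finset.univ_unique, hd]
  | succ k ih =>
    intro A₀ A
    have h1 : List.ofFn A = A 0 :: List.ofFn (Fin.tail A) := by
      rw [List.ofFn_succ]; rfl
    rw [h1, altL_cons, ← ih, ← ih, ← altSumF_cons, Fin.cons_self_tail]

lemma altL_perm (ψ : Finset J → ℝ) {L L' : List (Finset J)} (h : L.Perm L') :
    ∀ A₀, altL ψ A₀ L = altL ψ A₀ L' := by
  induction h with
  | nil => intro _; rfl
  | cons x _ ih => intro A₀; simp [altL_cons, ih]
  | swap x y l =>
    intro A₀
    simp only [altL_cons]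
    rw [Finset.union_right_comm]
    ring
  | trans _ _ ih1 ih2 => intro A₀; rw [ih1, ih2]

lemma altL_union (ψ : Finset J → ℝ) (A₀ B C : Finset J) (L : List (Finset J)) :
    altL ψ A₀ ((B ∪ C) :: L) = altL ψ A₀ (B :: L) + altL ψ (A₀ ∪ B) (C :: L) := by
  simp only [altL_cons, Finset.union_assoc]
  ring

lemma altL_subset (ψ : Finset J → ℝ) {A₀ B : Finset J} (L : List (Finset J)) (h : B ⊆ A₀) :
    altL ψ A₀ (B :: L) = 0 := by
  simp [altL_cons, Finset.union_eq_left.mpr h]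

lemma altL_dup (ψ : Finset J → ℝ) (A₀ B : Finset J) (L : List (Finset J)) :
    altL ψ A₀ (B :: B :: L) = altL ψ A₀ (B :: L) := by
  simp only [altL_cons, Finset.union_assoc, Finset.union_self]
  ring

lemma main (ψ : Finset J → ℝ)
    (mono : ∀ (S : Finset J) (x : J), ψ S ≤ ψ (insert x S))
    (weak : ∀ (A₀ : Finset J) (L : List (Finset J)), 2 ≤ L.length →
      (∀ B ∈ L, Disjoint A₀ B) → L.Pairwise Disjoint → altL ψ A₀ L ≤ 0) :
    ∀ (A₀ : Finset J) (L : List (Finset J)), L ≠ [] → altL ψ A₀ L ≤ 0 := by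
  suffices h : ∀ (n : ℕ) (A₀ : Finset J) (L : List (Finset J)),
      (L.map Finset.card).sum = n → L ≠ [] → altL ψ A₀ L ≤ 0 by
    intro A₀ L hL; exact h _ A₀ L rfl hL
  intro n
  induction n using Nat.strong_induction_on with
  | _ n ih =>
  intro A₀ L hm hne
  by_cases hsub : ∃ B ∈ L, B ⊆ A₀
  · obtain ⟨B, hB, hBA⟩ := hsub
    rw [altL_perm ψ (List.perm_cons_erase hB) A₀, altL_subset ψ _ hBA]
  by_cases hbig : ∃ B ∈ L, 2 ≤ B.card
  · obtain ⟨B, hBL, hB2⟩ := hbig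
    have hperm := List.perm_cons_erase hBL
    set L' := L.erase B with hL'
    have hmeq : B.card + (L'.map Finset.card).sum = n := by
      have h := (hperm.map Finset.card).sum_eq
      rw [hm] at h
      simpa using h.symm
    obtain ⟨x, hx⟩ : B.Nonempty := Finset.card_pos.mp (by omega)
    have hBdec : B = {x} ∪ B.erase x := by
      rw [← Finset.insert_eq, Finset.insert_erase hx]
    rw [altL_perm ψ hperm A₀]
    calc altL ψ A₀ (B :: L') = altL ψ A₀ (({x} ∪ B.erase x) :: L') := by rw [← hBdec]
      _ = altL ψ A₀ ({x} :: L') + altL ψ (A₀ ∪ {x}) ((B.erase x) :: L') :=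
          altL_union ψ A₀ {x} (B.erase x) L'
      _ ≤ 0 := by
        have hcard : (B.erase x).card = B.card - 1 := Finset.card_erase_of_mem hx
        have h1 : altL ψ A₀ ({x} :: L') ≤ 0 :=
          ih (1 + (L'.map Finset.card).sum) (by omega) A₀ _ (by simp) (by simp)
        have h2 : altL ψ (A₀ ∪ {x}) ((B.erase x) :: L') ≤ 0 :=
          ih ((B.card - 1) + (L'.map Finset.card).sum) (by omega) _ _ (by simp [hcard]) (by simp)
        linarith
  by_cases hdup : L.Nodup
  · have hsing : ∀ B ∈ L, ∃ x, x ∉ A₀ ∧ B = {x} := by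
      intro B hBL
      have hc1 : B.card = 1 := by
        have h2 : ¬ 2 ≤ B.card := fun h => hbig ⟨B, hBL, h⟩
        have h0 : B ≠ ∅ := fun h => hsub ⟨B, hBL, h ▸ Finset.empty_subset A₀⟩
        have := Finset.card_pos.mpr (Finset.nonempty_iff_ne_empty.mpr h0)
        omega
      obtain ⟨x, hx⟩ := Finset.card_eq_one.mp hc1
      exact ⟨x, fun hxA => hsub ⟨B, hBL, by rw [hx]; exact Finset.singleton_subset_iff.mpr hxA⟩, hx⟩
    rcases L with _ | ⟨B, L'⟩
    · exact absurd rfl hne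
    rcases L' with _ | ⟨C, L''⟩
    · obtain ⟨x, hxA, rfl⟩ := hsing B (by simp)
      have hu : A₀ ∪ {x} = insert x A₀ := by rw [Finset.union_comm, ← Finset.insert_eq]
      simp only [altL_cons, altL_nil, hu]
      have := mono A₀ x
      linarith
    · apply weak A₀ _ (by simp)
      · intro E hE
        obtain ⟨x, hxA, rfl⟩ := hsing E hE
        exact Finset.disjoint_singleton_right.mpr hxA
      · refine List.Pairwise.imp_of_mem ?_ hdup
        intro a b ha hb hne'
        obtain ⟨x, _, rfl⟩ := hsing a ha
        obtain ⟨y, _, rfl⟩ := hsing b hb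
        rw [Finset.disjoint_singleton_right, Finset.mem_singleton]
        intro h; exact hne' (by rw [h])
  · obtain ⟨B, hdupB⟩ := List.exists_duplicate_iff_not_nodup.mpr hdup
    have hsl : List.Sublist [B, B] L := List.duplicate_iff_sublist.mp hdupB
    obtain ⟨L'', hperm⟩ := hsl.exists_perm_append
    rw [altL_perm ψ hperm A₀, show (([B,B] ++ L'' : List (Finset J))) = B :: B :: L'' from rfl,
      altL_dup]
    have hBpos : 0 < B.card := by
      have hmem : B ∈ L := hdupB.mem
      have h0 : B ≠ ∅ := fun h => hsub ⟨B, hmem, h ▸ Finset.empty_subset A₀⟩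
      exact Finset.card_pos.mpr (Finset.nonempty_iff_ne_empty.mpr h0)
    have hmeq : B.card + B.card + ((L''.map Finset.card)).sum = n := by
      have h := (hperm.map Finset.card).sum_eq
      rw [hm] at h
      simpa [add_assoc] using h.symm
    exact ih (B.card + (L''.map Finset.card).sum) (by omega) A₀ _ (by simp) (by simp)

lemma altL_add (f g : Finset J → ℝ) : ∀ (L : List (Finset J)) (A₀ : Finset J),
    altL (fun X => f X + g X) A₀ L = altL f A₀ L + altL g A₀ L := by
  intro L
  induction L with
  | nil => intro A₀; rfl
  | cons B L ih => intro A₀; simp [altL_cons, ih]; ring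

lemma altL_sub (f g : Finset J → ℝ) : ∀ (L : List (Finset J)) (A₀ : Finset J),
    altL (fun X => f X - g X) A₀ L = altL f A₀ L - altL g A₀ L := by
  intro L
  induction L with
  | nil => intro A₀; rfl
  | cons B L ih => intro A₀; simp [altL_cons, ih]; ring

lemma altL_charge (c : J → ℝ) :
    ∀ (L : List (Finset J)), 2 ≤ L.length → ∀ S : Finset J,
      (∀ B ∈ L, Disjoint S B) → L.Pairwise Disjoint →
      altL (fun X => ∑ x ∈ X, c x) S L = 0 := by
  intro L
  induction L with
  | nil => intro h; simp at h
  | cons B L ih =>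
    intro hlen S hS hP
    rcases L with _ | ⟨C, L'⟩
    · simp at hlen
    · rcases L' with _ | ⟨D, L''⟩
      · have hSB : Disjoint S B := hS B (by simp)
        have hSC : Disjoint S C := hS C (by simp)
        have hBC : Disjoint B C := by
          have := List.pairwise_cons.mp hP
          exact this.1 C (by simp)
        have e1 : ∑ x ∈ S ∪ C, c x = ∑ x ∈ S, c x + ∑ x ∈ C, c x := Finset.sum_union hSC
        have e2 : ∑ x ∈ S ∪ B, c x = ∑ x ∈ S, c x + ∑ x ∈ B, c x := Finset.sum_union hSB
        have e3 : ∑ x ∈ S ∪ B ∪ C, c x = (∑ x ∈ S, c x + ∑ x ∈ B, c x) + ∑ x ∈ C, c x := by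
          rw [Finset.sum_union (by rw [Finset.disjoint_union_left]; exact ⟨hSC, hBC⟩), e2]
        simp only [altL_cons, altL_nil]
        rw [e1, e2, e3]
        ring
      · have hlen' : 2 ≤ (C :: D :: L'').length := by simp
        have hP' : (C :: D :: L'').Pairwise Disjoint := (List.pairwise_cons.mp hP).2
        have hBt : ∀ E ∈ C :: D :: L'', Disjoint B E := (List.pairwise_cons.mp hP).1
        rw [altL_cons]
        rw [ih hlen' S (fun E hE => hS E (List.mem_cons_of_mem _ hE)) hP']
        rw [ih hlen' (S ∪ B) (fun E hE => by
          rw [Finset.disjoint_union_left]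
          exact ⟨hS E (List.mem_cons_of_mem _ hE), hBt E hE⟩) hP']
        ring


end Stmt16

/-- A set function on a finite set is weakly infinite-alternating iff it is the
difference of an infinite-alternating function and a nonnegative charge. -/
theorem stmt16 {J : Type*} [DecidableEq J] [Fintype J] (ψ : Finset J → ℝ) :
    WeaklyInfAltF ψ ↔
      ∃ (φ : Finset J → ℝ) (c : J → ℝ), InfAltF φ ∧ (∀ x, 0 ≤ c x) ∧
        ∀ X : Finset J, ψ X = φ X - ∑ x ∈ X, c x := by
  constructor
  · rintro ⟨h0, hweak⟩
    classical
    set c : J → ℝ := fun x => ∑ S : Finset J, max 0 (ψ S - ψ (insert x S)) with hc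
    have hc0 : ∀ x, 0 ≤ c x := fun x => Finset.sum_nonneg (fun S _ => le_max_left 0 _)
    have hcb : ∀ (S : Finset J) (x : J), ψ S - ψ (insert x S) ≤ c x := by
      intro S x
      calc ψ S - ψ (insert x S) ≤ max 0 (ψ S - ψ (insert x S)) := le_max_right _ _
        _ ≤ c x := Finset.single_le_sum
            (fun T (_ : T ∈ Finset.univ) => le_max_left 0 (ψ T - ψ (insert x T)))
            (Finset.mem_univ S)
    set φ : Finset J → ℝ := fun X => ψ X + ∑ x ∈ X, c x with hφdef
    have hmono : ∀ (S : Finset J) (x : J), φ S ≤ φ (insert x S) := by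
      intro S x
      by_cases hx : x ∈ S
      · rw [Finset.insert_eq_self.mpr hx]
      · have h1 : ∑ y ∈ insert x S, c y = c x + ∑ y ∈ S, c y := Finset.sum_insert hx
        have h2 := hcb S x
        simp only [hφdef]
        rw [h1]
        linarith
    have hweakL : ∀ (A₀ : Finset J) (L : List (Finset J)), 2 ≤ L.length →
        (∀ B ∈ L, Disjoint A₀ B) → L.Pairwise Disjoint → Stmt16.altL ψ A₀ L ≤ 0 := by
      intro A₀ L hlen hd hp
      have hd1 : ∀ i, Disjoint A₀ (L.get i) := fun i => hd _ (L.get_mem i)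
      have hd2 : ∀ i j, i ≠ j → Disjoint (L.get i) (L.get j) := by
        have hp' := List.pairwise_iff_get.mp hp
        intro i j hij
        rcases lt_or_gt_of_ne hij with h | h
        · exact hp' i j h
        · exact (hp' j i h).symm
      have h3 := hweak L.length hlen A₀ L.get hd1 hd2
      rwa [Stmt16.altSumF_eq_altL, List.ofFn_get] at h3
    have hweakφ : ∀ (A₀ : Finset J) (L : List (Finset J)), 2 ≤ L.length →
        (∀ B ∈ L, Disjoint A₀ B) → L.Pairwise Disjoint → Stmt16.altL φ A₀ L ≤ 0 := by
      intro A₀ L hlen hd hp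
      rw [hφdef, Stmt16.altL_add, Stmt16.altL_charge c L hlen A₀ hd hp]
      have := hweakL A₀ L hlen hd hp
      linarith
    have hmain := Stmt16.main φ hmono hweakφ
    refine ⟨φ, c, ⟨?_, ?_⟩, hc0, ?_⟩
    · simp [hφdef, h0]
    · intro k hk A₀ A
      rw [Stmt16.altSumF_eq_altL]
      apply hmain A₀ _
      intro h
      have h4 := congrArg List.length h
      simp at h4
      omega
    · intro X; simp [hφdef]
  · rintro ⟨φ, c, ⟨hφ0, hφ⟩, hc0, hψeq⟩
    constructor
    · rw [hψeq]; simp [hφ0]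
    · intro k hk A₀ A hdA hdAA
      have hψfun : ψ = fun X => φ X - ∑ x ∈ X, c x := funext hψeq
      rw [Stmt16.altSumF_eq_altL, hψfun, Stmt16.altL_sub]
      have hch : Stmt16.altL (fun X => ∑ x ∈ X, c x) A₀ (List.ofFn A) = 0 := by
        apply Stmt16.altL_charge c (List.ofFn A) (by simpa using hk) A₀
        · intro B hB
          rw [List.mem_ofFn] at hB
          obtain ⟨i, rfl⟩ := hB
          exact hdA i
        · rw [List.pairwise_ofFn]
          intro i j hij
          exact hdAA i j (ne_of_lt hij)
      rw [hch]
      have h2 := hφ k (le_trans one_le_two hk) A₀ A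
      rw [Stmt16.altSumF_eq_altL] at h2
      linarith
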